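/- Kashiwara decomposition in one variable: Let A be a ℚ-algebra, and let N be a right module over the Weyl-type algebra A[v,y,∂_v,∂_y] (y, v commuting variables, [∂_y, y] = 1 etc.). Suppose every element of N is annihilated by some power of y. Let h = ∂_y·y acting on the right. Then N decomposes as N = ⊕_{i≥1} N(i), where N(i) is the eigenspace of h with eigenvalue i, and the right action of ∂_y maps N(i) to N(i+1) bijectively for all i ≥ 1. -/

import Mathlib

open Polynomial

set_option linter.unusedSectionVars false

namespace Stmt10

variable {A : Type*} [CommRing A] [Algebra ℚ A]
  {N : Type*} [AddCommGroup N] [Module A N]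

lemma cancel (q : ℚ) (hq : q ≠ 0) (x : N) :
    algebraMap ℚ A q⁻¹ • (algebraMap ℚ A q • x) = x := by
  rw [smul_smul, ← map_mul, inv_mul_cancel₀ hq, map_one, one_smul]

variable (ρy ρdy : Module.End A N)

lemma hcomm (hy : ρy * ρdy - ρdy * ρy = 1) :
    (ρy * ρdy) * ρy = ρy * (ρy * ρdy) - ρy := by
  have h1 : ρdy * ρy = ρy * ρdy - 1 := by rw [← hy]; noncomm_ring
  calc (ρy * ρdy) * ρy = ρy * (ρdy * ρy) := by noncomm_ring
    _ = ρy * (ρy * ρdy) - ρy := by rw [h1]; noncomm_ring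

lemma hcommdy (hy : ρy * ρdy - ρdy * ρy = 1) :
    (ρy * ρdy) * ρdy = ρdy * (ρy * ρdy) + ρdy := by
  have h : (ρy * ρdy) * ρdy - ρdy * (ρy * ρdy) = (ρy * ρdy - ρdy * ρy) * ρdy := by
    noncomm_ring
  rw [hy, one_mul] at h
  rw [sub_eq_iff_eq_add] at h; rw [h]; abel

lemma hpow (hy : ρy * ρdy - ρdy * ρy = 1) (k : ℕ) :
    (ρy * ρdy) * ρy ^ k = ρy ^ k * (ρy * ρdy) - k • ρy ^ k := by
  induction k with
  | zero => simp
  | succ k ih =>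
    have : (ρy * ρdy) * ρy ^ (k+1) = ((ρy * ρdy) * ρy ^ k) * ρy := by
      rw [pow_succ]; noncomm_ring
    rw [this, ih, sub_mul, smul_mul_assoc, mul_assoc, hcomm ρy ρdy hy, ← pow_succ,
      succ_nsmul]
    noncomm_ring


/-- `P k = ∏_{j=1}^{k} (X - j)` in `A[X]`. -/
noncomputable def P (A : Type*) [CommRing A] (k : ℕ) : A[X] :=
  ∏ j ∈ Finset.range k, (X - C ((j + 1 : ℕ) : A))

lemma P_succ (A : Type*) [CommRing A] (k : ℕ) :
    P A (k + 1) = P A k * (X - C ((k + 1 : ℕ) : A)) :=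
  Finset.prod_range_succ _ _

lemma algebraMap_end_eq (c : A) :
    algebraMap A (Module.End A N) c = c • (1 : Module.End A N) := by
  ext x; simp [Module.algebraMap_end_apply]

lemma aeval_X_sub_C (H : Module.End A N) (c : A) :
    aeval H (X - C c) = H - c • 1 := by
  rw [map_sub, aeval_X, aeval_C, algebraMap_end_eq]

lemma key3 (hy : ρy * ρdy - ρdy * ρy = 1) (k : ℕ) :
    (ρdy ^ k * ρy ^ k : Module.End A N) = aeval (ρy * ρdy) (P A k) := by
  induction k with
  | zero => simp [P]
  | succ k ih =>
    have h1 : ρdy * ρy = ρy * ρdy - 1 := by rw [← hy]; noncomm_ring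
    have step : (ρdy ^ (k+1) * ρy ^ (k+1) : Module.End A N)
        = ρdy ^ k * ((ρy * ρdy - 1) * ρy ^ k) := by
      rw [← h1, pow_succ, pow_succ']
      noncomm_ring
    rw [step, sub_mul, hpow ρy ρdy hy k, one_mul]
    have hsm : (k : ℕ) • (ρy ^ k : Module.End A N) = ρy ^ k * ((k : A) • 1) := by
      rw [mul_smul_comm, mul_one, Nat.cast_smul_eq_nsmul]
    rw [hsm]
    have : (ρy ^ k * (ρy * ρdy) - ρy ^ k * ((k:A) • 1) - ρy ^ k : Module.End A N)
        = ρy ^ k * ((ρy * ρdy) - (((k+1:ℕ):A)) • 1) := by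
      push_cast
      rw [add_smul, one_smul]
      noncomm_ring
    rw [this, ← mul_assoc, ih, P_succ, map_mul, aeval_X_sub_C]

lemma aeval_eigen (H : Module.End A N) {c : A} {x : N} (hx : H x = c • x)
    (p : A[X]) : aeval H p x = p.eval c • x := by
  induction p using Polynomial.induction_on with
  | C a => simp [algebraMap_end_eq, Module.algebraMap_end_apply]
  | add p q hp hq =>
    rw [map_add, LinearMap.add_apply, hp, hq, eval_add, add_smul]
  | monomial n a hp =>
    have : (C a * X ^ (n + 1) : A[X]) = (C a * X ^ n) * X := by ring
    rw [this, map_mul, aeval_X, Module.End.mul_apply, hx, map_smul, hp, smul_smul]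
    congr 1
    simp [eval_mul]
    ring

/-- the `i`-eigenspace of `H`, for `i : ℕ`. -/
noncomputable def Eig (H : Module.End A N) (i : ℕ) : Submodule A N :=
  LinearMap.ker (H - (i : A) • 1)

lemma mem_Eig {H : Module.End A N} {i : ℕ} {x : N} :
    x ∈ Eig H i ↔ H x = (i : A) • x := by
  rw [Eig, LinearMap.mem_ker, LinearMap.sub_apply, LinearMap.smul_apply,
    Module.End.one_apply, sub_eq_zero]

lemma killer (H : Module.End A N) {ι : Type*} (f : ι → ℕ) (s : Finset ι) (x : N)
    (hx : x ∈ ⨆ j ∈ s, Eig H (f j)) :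
    aeval H (∏ j ∈ s, (X - C ((f j : A)))) x = 0 := by
  classical
  induction s using Finset.induction_on generalizing x with
  | empty => simp only [Finset.notMem_empty, iSup_false, iSup_bot] at hx
             rw [Submodule.mem_bot] at hx; simp [hx]
  | @insert a t ha ih =>
    rw [Finset.iSup_insert] at hx
    obtain ⟨y, hy', z, hz, rfl⟩ := Submodule.mem_sup.mp hx
    rw [Finset.prod_insert ha, map_add]
    have hyz : aeval H (∏ j ∈ t, (X - C ((f j : A)))) z = 0 := ih z hz
    have h1 : aeval H ((X - C ((f a : A))) * ∏ j ∈ t, (X - C ((f j : A)))) z = 0 := by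
      rw [map_mul, Module.End.mul_apply, hyz, map_zero]
    have h2 : aeval H ((X - C ((f a : A))) * ∏ j ∈ t, (X - C ((f j : A)))) y = 0 := by
      rw [mul_comm, map_mul, Module.End.mul_apply, aeval_X_sub_C]
      have : (H - ((f a : A)) • 1) y = 0 := hy'
      rw [this, map_zero]
    rw [h1, h2, add_zero]


lemma indep (H : Module.End A N) :
    iSupIndep (fun i : {i : ℕ // 1 ≤ i} => Eig H (i : ℕ)) := by
  rw [iSupIndep_def]
  intro i
  rw [Submodule.disjoint_def]
  intro x hxi hxs
  rw [iSup_subtype', Submodule.mem_iSup_iff_exists_finset] at hxs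
  obtain ⟨s, hs⟩ := hxs
  have h0 := killer H (fun j : {j : {i : ℕ // 1 ≤ i} // j ≠ i} => ((j : {i : ℕ // 1 ≤ i}) : ℕ))
    s x hs
  have hxe : H x = ((i : ℕ) : A) • x := mem_Eig.mp hxi
  rw [aeval_eigen H hxe] at h0
  have hev : eval ((i : ℕ) : A) (∏ j ∈ s,
        (X - C (((j : {i : ℕ // 1 ≤ i}) : ℕ) : A)))
      = algebraMap ℚ A (∏ j ∈ s, (((i : ℕ) : ℚ) - (((j : {i : ℕ // 1 ≤ i}) : ℕ) : ℚ))) := by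
    rw [map_prod, eval_prod]
    refine Finset.prod_congr rfl fun j _ => ?_
    rw [eval_sub, eval_X, eval_C, map_sub, map_natCast, map_natCast]
  have hq0 : (∏ j ∈ s, (((i : ℕ) : ℚ) - (((j : {i : ℕ // 1 ≤ i}) : ℕ) : ℚ))) ≠ 0 := by
    rw [Finset.prod_ne_zero_iff]
    intro j _
    rw [sub_ne_zero]
    intro hc
    exact j.2 (Subtype.ext (by exact_mod_cast hc.symm))
  rw [hev] at h0
  have := cancel (A := A) _ hq0 x
  rw [h0, smul_zero] at this
  exact this.symm

lemma S_inv (H : Module.End A N) (p : A[X]) (x : N)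
    (hx : x ∈ ⨆ i : {i : ℕ // 1 ≤ i}, Eig H (i : ℕ)) :
    aeval H p x ∈ ⨆ i : {i : ℕ // 1 ≤ i}, Eig H (i : ℕ) := by
  refine Submodule.iSup_induction _ (motive := fun z => aeval H p z ∈
    ⨆ i : {i : ℕ // 1 ≤ i}, Eig H (i : ℕ)) hx ?_ ?_ ?_
  · intro i z hz
    rw [aeval_eigen H (mem_Eig.mp hz) p]
    exact Submodule.mem_iSup_of_mem i (Submodule.smul_mem _ _ hz)
  · show aeval H p 0 ∈ _
    rw [map_zero]; exact Submodule.zero_mem _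
  · intro y z hy hz
    show aeval H p (y + z) ∈ _
    rw [map_add]; exact Submodule.add_mem _ hy hz

lemma span_aux (H : Module.End A N) (k : ℕ) :
    ∀ x : N, aeval H (P A k) x = 0 → x ∈ ⨆ i : {i : ℕ // 1 ≤ i}, Eig H (i : ℕ) := by
  induction k with
  | zero =>
    intro x hx
    rw [P, Finset.range_zero, Finset.prod_empty, map_one, Module.End.one_apply] at hx
    rw [hx]; exact Submodule.zero_mem _
  | succ k ih =>
    intro x hx
    have hcmp : (H - ((k + 1 : ℕ) : A) • 1) * aeval H (P A k) = aeval H (P A (k + 1)) := by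
      rw [← aeval_X_sub_C H ((k + 1 : ℕ) : A), ← map_mul, mul_comm, ← P_succ]
    have hxy : aeval H (P A k) ((H - ((k + 1 : ℕ) : A) • 1) x) = 0 := by
      rw [P_succ, map_mul, Module.End.mul_apply, aeval_X_sub_C] at hx
      exact hx
    have hyS := ih _ hxy
    obtain ⟨q, hq⟩ := X_sub_C_dvd_sub_C_eval (a := ((k + 1 : ℕ) : A)) (p := P A k)
    have e1 : aeval H (P A k) x ∈ Eig H (k + 1) := by
      rw [Eig, LinearMap.mem_ker, ← Module.End.mul_apply, hcmp]
      exact hx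
    have e2 : aeval H q ((H - ((k + 1 : ℕ) : A) • 1) x) ∈
        ⨆ i : {i : ℕ // 1 ≤ i}, Eig H (i : ℕ) := S_inv H q _ hyS
    have hpoly : C (eval ((k + 1 : ℕ) : A) (P A k)) = P A k - q * (X - C ((k + 1 : ℕ) : A)) := by
      rw [mul_comm, ← hq]; ring
    have e3 : eval ((k + 1 : ℕ) : A) (P A k) • x
        = aeval H (P A k) x - aeval H q ((H - ((k + 1 : ℕ) : A) • 1) x) := by
      have hh := congrArg (fun f => f x) (congrArg (aeval H) hpoly)
      simp only [map_sub, map_mul, map_smul, LinearMap.sub_apply, Module.End.mul_apply,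
        LinearMap.smul_apply, Module.End.one_apply, aeval_X, aeval_C,
        Module.algebraMap_end_apply] at hh ⊢
      exact hh
    have he : eval ((k + 1 : ℕ) : A) (P A k)
        = algebraMap ℚ A (∏ j ∈ Finset.range k, (((k + 1 : ℕ) : ℚ) - ((j + 1 : ℕ) : ℚ))) := by
      rw [map_prod, P, eval_prod]
      refine Finset.prod_congr rfl fun j _ => ?_
      rw [eval_sub, eval_X, eval_C, map_sub, map_natCast, map_natCast]
    have hq0 : (∏ j ∈ Finset.range k, (((k + 1 : ℕ) : ℚ) - ((j + 1 : ℕ) : ℚ))) ≠ 0 := by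
      rw [Finset.prod_ne_zero_iff]
      intro j hj
      rw [sub_ne_zero]
      have : j + 1 < k + 1 := Nat.succ_lt_succ (Finset.mem_range.mp hj)
      exact fun hc => absurd (Nat.cast_injective hc) (Nat.ne_of_gt this)
    have hsx : eval ((k + 1 : ℕ) : A) (P A k) • x ∈
        ⨆ i : {i : ℕ // 1 ≤ i}, Eig H (i : ℕ) := by
      rw [e3]
      exact Submodule.sub_mem _
        (Submodule.mem_iSup_of_mem (⟨k + 1, Nat.succ_le_succ (Nat.zero_le k)⟩ :
          {i : ℕ // 1 ≤ i}) e1) e2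
    have hfin := cancel (A := A) _ hq0 x
    rw [← he] at hfin
    rw [← hfin]
    exact Submodule.smul_mem _ _ hsx

end Stmt10

/-- Kashiwara decomposition in one variable: let `A` be a
`ℚ`-algebra and `N` a right module over `A[v,y,∂_v,∂_y]`, encoded by the four
commuting-data right-action operators `ρv, ρy, ρdv, ρdy ∈ End_A(N)`
(for a right module, `n·(ab) = (n·a)·b`, so the relation `[∂_y, y] = 1`
becomes `ρy ∘ ρdy − ρdy ∘ ρy = id`, and similarly for `v, ∂_v`; all other
pairs commute).  Assume every element of `N` is annihilated by some power
of `y`.  Let `h = ∂_y·y` act on the right, i.e. `h = ρy ∘ ρdy`, and let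
`E i = ker (h − i·id)` be its `i`-eigenspace.  Then `N = ⊕_{i≥1} E i`, and
for every `i ≥ 1` the right action of `∂_y` maps `E i` bijectively onto
`E (i+1)`. -/
theorem stmt10 (A : Type*) [CommRing A] [Algebra ℚ A]
    (N : Type*) [AddCommGroup N] [Module A N]
    (ρv ρy ρdv ρdy : Module.End A N)
    (hv : ρv ∘ₗ ρdv - ρdv ∘ₗ ρv = LinearMap.id)
    (hy : ρy ∘ₗ ρdy - ρdy ∘ₗ ρy = LinearMap.id)
    (hvy : ρv ∘ₗ ρy = ρy ∘ₗ ρv)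
    (hvdy : ρv ∘ₗ ρdy = ρdy ∘ₗ ρv)
    (hdvy : ρdv ∘ₗ ρy = ρy ∘ₗ ρdv)
    (hdvdy : ρdv ∘ₗ ρdy = ρdy ∘ₗ ρdv)
    (htors : ∀ x : N, ∃ k : ℕ, (ρy ^ k) x = 0) :
    (DirectSum.IsInternal fun i : {i : ℕ // 1 ≤ i} =>
        LinearMap.ker ((ρy ∘ₗ ρdy) - ((i : ℕ) : A) • (LinearMap.id : Module.End A N)))
    ∧ (∀ i : ℕ, 1 ≤ i →
        Submodule.map ρdy
            (LinearMap.ker ((ρy ∘ₗ ρdy) - ((i : A) • (LinearMap.id : Module.End A N))))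
          = LinearMap.ker ((ρy ∘ₗ ρdy) - (((i : ℕ) + 1 : A) • (LinearMap.id : Module.End A N)))
        ∧ Disjoint
            (LinearMap.ker ((ρy ∘ₗ ρdy) - ((i : A) • (LinearMap.id : Module.End A N))))
            (LinearMap.ker ρdy)) := by
  classical
  have hy' : ρy * ρdy - ρdy * ρy = 1 := hy
  have memker : ∀ (c : A) (x : N),
      x ∈ LinearMap.ker ((ρy ∘ₗ ρdy) - c • (LinearMap.id : Module.End A N)) ↔
        (ρy * ρdy) x = c • x := by
    intro c x
    rw [LinearMap.mem_ker, LinearMap.sub_apply, LinearMap.smul_apply, LinearMap.id_apply,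
      sub_eq_zero]
    rfl
  constructor
  · show DirectSum.IsInternal fun i : {i : ℕ // 1 ≤ i} => Stmt10.Eig (ρy * ρdy) (i : ℕ)
    rw [DirectSum.isInternal_submodule_iff_iSupIndep_and_iSup_eq_top]
    refine ⟨Stmt10.indep _, ?_⟩
    rw [eq_top_iff]
    intro x _
    obtain ⟨k, hk⟩ := htors x
    have h0 : Polynomial.aeval (ρy * ρdy) (Stmt10.P A k) x = 0 := by
      rw [← Stmt10.key3 ρy ρdy hy' k, Module.End.mul_apply, hk, map_zero]
    exact Stmt10.span_aux _ k x h0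
  · intro i hi
    have hiQ : ((i : ℕ) : ℚ) ≠ 0 := Nat.cast_ne_zero.mpr (by omega)
    have hiA : ((i : ℕ) : A) = algebraMap ℚ A ((i : ℕ) : ℚ) := (map_natCast _ i).symm
    constructor
    · apply le_antisymm
      · rintro _ ⟨x, hx, rfl⟩
        have hx' : (ρy * ρdy) x = (i : A) • x := (memker _ x).mp hx
        simp only [Module.End.mul_apply] at hx'
        rw [memker]
        have h1 := congrArg (fun f => f x) (Stmt10.hcommdy ρy ρdy hy')
        simp only [Module.End.mul_apply, LinearMap.add_apply] at h1
        simp only [Module.End.mul_apply]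
        rw [h1, hx', map_smul, add_smul, one_smul]
      · intro z hz
        have hz' : (ρy * ρdy) z = ((i : ℕ) + 1 : A) • z := (memker _ z).mp hz
        simp only [Module.End.mul_apply] at hz'
        have hdyy : ρdy * ρy = ρy * ρdy - 1 := by rw [← hy']; noncomm_ring
        have hdyz : ρdy (ρy z) = ((i : ℕ) : A) • z := by
          have h2 := congrArg (fun f => f z) hdyy
          simp only [Module.End.mul_apply, LinearMap.sub_apply, Module.End.one_apply] at h2
          rw [h2, hz', add_smul, one_smul, add_sub_cancel_right]
        refine ⟨algebraMap ℚ A ((i : ℕ) : ℚ)⁻¹ • (ρy z), ?_, ?_⟩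
        · rw [SetLike.mem_coe, memker]
          simp only [Module.End.mul_apply, map_smul]
          rw [hdyz, map_smul, smul_comm]
        · rw [map_smul, hdyz, smul_smul, hiA, ← map_mul,
            inv_mul_cancel₀ hiQ, map_one, one_smul]
    · rw [Submodule.disjoint_def]
      intro x hx1 hx2
      have hx' : (ρy * ρdy) x = (i : A) • x := (memker _ x).mp hx1
      have h2 : ρdy x = 0 := LinearMap.mem_ker.mp hx2
      have h3 : ((i : ℕ) : A) • x = 0 := by
        rw [← hx']
        show ρy (ρdy x) = 0
        rw [h2, map_zero]
      have hc := Stmt10.cancel (A := A) _ hiQ x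
      rw [← hiA, h3, smul_zero] at hc
      exact hc.symm
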